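/- Let f : (ℝ^m)^n → ℝ^m be a strategyproof mechanism under the Euclidean norm, let A be a profile with output W = f(A), and let i be an agent. Then for every point A_i' on the closed segment between A_i and W, f(A_i', A_{-i}) = W. (I.e., moving an agent along the straight segment toward the output does not change the output.) -/

import Mathlib

open scoped RealInnerProductSpace

set_option maxHeartbeats 1000000 in
/-- Moving an agent along the segment toward the output of a
strategyproof mechanism (Euclidean norm) does not change the output. -/
theorem stmt2 {m n : ℕ} (f : (Fin n → EuclideanSpace ℝ (Fin m)) → EuclideanSpace ℝ (Fin m))
    (hsp : ∀ (A : Fin n → EuclideanSpace ℝ (Fin m)) (i : Fin n) (A' : EuclideanSpace ℝ (Fin m)),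
      ‖f A - A i‖ ≤ ‖f (Function.update A i A') - A i‖)
    (A : Fin n → EuclideanSpace ℝ (Fin m)) (i : Fin n)
    (A' : EuclideanSpace ℝ (Fin m)) (hA' : A' ∈ segment ℝ (A i) (f A)) :
    f (Function.update A i A') = f A := by
  obtain ⟨a, b, ha, hb, hab, hA'⟩ := hA'
  set W := f A with hW
  set B := f (Function.update A i A') with hB
  have hb1 : b ≤ 1 := by linarith
  rcases eq_or_lt_of_le hb with hb0 | hb0
  · have hAi : A' = A i := by
      rw [← hA', ← hb0]
      have : a = 1 := by linarith
      simp [this]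
    show f (Function.update A i A') = f A
    rw [hAi, Function.update_eq_self]
  · -- main case: b > 0
    set u : EuclideanSpace ℝ (Fin m) := W - A i with hu
    set v : EuclideanSpace ℝ (Fin m) := B - A i with hv
    have haeq : a = 1 - b := by linarith
    have hA'sub : A' - A i = b • u := by
      rw [← hA', haeq, hu]; module
    have hWA' : W - A' = (1 - b) • u := by
      rw [← hA', haeq, hu]; module
    have hBA' : B - A' = v - b • u := by
      rw [hv, ← hA'sub]; abel
    have h1 : ‖u‖ ≤ ‖v‖ := hsp A i A'
    have h2 : ‖B - A'‖ ≤ ‖W - A'‖ := by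
      have h := hsp (Function.update A i A') i (A i)
      rwa [Function.update_idem, Function.update_eq_self, Function.update_self] at h
    have hnWA' : ‖W - A'‖ = (1 - b) * ‖u‖ := by
      rw [hWA', norm_smul, Real.norm_eq_abs, abs_of_nonneg (by linarith)]
    have h2' : ‖v - b • u‖ ≤ (1 - b) * ‖u‖ := by
      rw [← hBA', ← hnWA']; exact h2
    have hbu : ‖b • u‖ = b * ‖u‖ := by
      rw [norm_smul, Real.norm_eq_abs, abs_of_nonneg hb]
    have htri : ‖v‖ ≤ ‖v - b • u‖ + ‖b • u‖ := by
      calc ‖v‖ = ‖(v - b • u) + b • u‖ := by congr 1; abel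
      _ ≤ ‖v - b • u‖ + ‖b • u‖ := norm_add_le _ _
    have hvu : ‖v‖ = ‖u‖ := by
      have : ‖v‖ ≤ ‖u‖ := by
        calc ‖v‖ ≤ ‖v - b • u‖ + ‖b • u‖ := htri
        _ ≤ (1 - b) * ‖u‖ + b * ‖u‖ := by rw [hbu]; linarith
        _ = ‖u‖ := by ring
      linarith
    have heq1 : ‖v - b • u‖ = (1 - b) * ‖u‖ := by
      rw [hbu] at htri
      linarith
    -- equality in triangle inequality ⇒ inner product equality
    have hinner : (inner ℝ (v - b • u) (b • u) : ℝ) = ‖v - b • u‖ * ‖b • u‖ := by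
      have hsq : ‖(v - b • u) + b • u‖ ^ 2 =
          ‖v - b • u‖ ^ 2 + 2 * (inner ℝ (v - b • u) (b • u) : ℝ) + ‖b • u‖ ^ 2 := by
        rw [← real_inner_self_eq_norm_sq, ← real_inner_self_eq_norm_sq,
          ← real_inner_self_eq_norm_sq]
        rw [inner_add_add_self, real_inner_comm (b • u)]
        ring
      have hnn : ‖(v - b • u) + b • u‖ = ‖v - b • u‖ + ‖b • u‖ := by
        have : (v - b • u) + b • u = v := by abel
        rw [this, hvu, heq1, hbu]; ring
      have h3 : ‖v - b • u‖ ^ 2 + 2 * (inner ℝ (v - b • u) (b • u) : ℝ) + ‖b • u‖ ^ 2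
          = (‖v - b • u‖ + ‖b • u‖) ^ 2 := by rw [← hnn, hsq]
      nlinarith [h3]
    have hvuinner : (inner ℝ v u : ℝ) = ‖u‖ ^ 2 := by
      have hexp : (inner ℝ (v - b • u) (b • u) : ℝ) = b * (inner ℝ v u : ℝ) - b ^ 2 * ‖u‖ ^ 2 := by
        simp only [inner_sub_left, real_inner_smul_left, real_inner_smul_right,
          real_inner_self_eq_norm_sq]
        rw [hbu]
        ring
      rw [hexp, heq1, hbu] at hinner
      nlinarith [sq_nonneg ‖u‖]
    have hvequ : v = u := by
      have : ‖v - u‖ ^ 2 = 0 := by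
        rw [← real_inner_self_eq_norm_sq, inner_sub_sub_self,
          real_inner_self_eq_norm_sq, real_inner_self_eq_norm_sq, hvu]
        have huv : (inner ℝ u v : ℝ) = ‖u‖ ^ 2 := by
          rw [real_inner_comm]; exact hvuinner
        rw [huv, hvuinner]
        ring
      have := pow_eq_zero_iff (n := 2) (by norm_num) |>.mp this
      exact sub_eq_zero.mp (norm_eq_zero.mp this)
    have : B - A i = W - A i := hvequ
    have := sub_left_injective this
    exact this
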